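/- Let π_ref, π* be positive distributions on a finite set A satisfying π*(a) = π_ref(a)exp(Q(a)/β)/Z with β > 0. Then for every a, Q(a) - E_{a'∼π_ref}[Q(a')] = β log(π*(a)/π_ref(a)) + β·D_KL(π_ref ‖ π*), where D_KL(π_ref‖π*) = Σ_a π_ref(a) log(π_ref(a)/π*(a)). -/
import Mathlib


theorem tdpo_advantage_identity
    {A : Type*} [Fintype A]
    (πref πstar : A → ℝ) (Q : A → ℝ) (β : ℝ) (hβ : 0 < β)
    (href_pos : ∀ a, 0 < πref a) (hstar_pos : ∀ a, 0 < πstar a)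
    (href_sum : ∑ a, πref a = 1) (hstar_sum : ∑ a, πstar a = 1)
    (Z : ℝ) (hZ : Z = ∑ a, πref a * Real.exp (Q a / β))
    (hstar : ∀ a, πstar a = πref a * Real.exp (Q a / β) / Z) :
    ∀ a, Q a - (∑ a', πref a' * Q a') =
      β * Real.log (πstar a / πref a) +
        β * ∑ a', πref a' * Real.log (πref a' / πstar a') := by
  have hne : Nonempty A := by
    by_contra h
    simp [not_nonempty_iff.mp h] at href_sum
  have hZpos : 0 < Z := by
    rw [hZ]
    exact Finset.sum_pos (fun a _ => mul_pos (href_pos a) (Real.exp_pos _))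
      Finset.univ_nonempty
  have hlog : ∀ a, Real.log (πstar a / πref a) = Q a / β - Real.log Z := by
    intro a
    have : πstar a / πref a = Real.exp (Q a / β) / Z := by
      rw [hstar a, div_div, mul_comm Z, ← div_div,
        mul_div_cancel_left₀ _ (href_pos a).ne']
    rw [this, Real.log_div (Real.exp_ne_zero _) hZpos.ne', Real.log_exp]
  have hlog' : ∀ a, Real.log (πref a / πstar a) = Real.log Z - Q a / β := by
    intro a
    rw [show πref a / πstar a = (πstar a / πref a)⁻¹ by
      field_simp, Real.log_inv, hlog a]
    ring
  intro a
  have hsum : ∑ a', πref a' * Real.log (πref a' / πstar a')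
      = Real.log Z - (∑ a', πref a' * Q a') / β := by
    simp only [hlog', mul_sub]
    rw [Finset.sum_sub_distrib, ← Finset.sum_mul, href_sum, one_mul,
      Finset.sum_div]
    congr 1
    exact Finset.sum_congr rfl fun a' _ => by ring
  rw [hsum, hlog a]
  field_simp
  ring
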